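/- Let N be a positive integer. If the congruence ABC conjecture holds for N (i.e., for each ε > 0 there exists a constant C_ε such that f((a,b,c),ε) < C_ε for every ABC-solution (a,b,c) with N dividing a·b·c), then the full ABC conjecture holds (i.e., for each ε > 0 there exists a constant C'_ε such that f((a,b,c),ε) < C'_ε for every ABC-solution (a,b,c)). -/

import Mathlib

/-- An ABC-solution: distinct, pairwise coprime integers with a+b+c = 0, a < 0, b < 0. -/
def IsABCSolution (a b c : ℤ) : Prop :=
  a + b + c = 0 ∧ a < 0 ∧ b < 0 ∧
  a ≠ b ∧ b ≠ c ∧ a ≠ c ∧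
  IsCoprime a b ∧ IsCoprime b c ∧ IsCoprime a c

/-- The radical of a natural number: the product of its distinct prime factors. -/
def rad (n : ℕ) : ℕ := ∏ p ∈ n.primeFactors, p

/-- The quality function f((a,b,c),ε) = log c − (1+ε)·log rad(|a·b·c|). -/
noncomputable def fABC (a b c : ℤ) (ε : ℝ) : ℝ :=
  Real.log (c : ℝ) - (1 + ε) * Real.log (rad (a * b * c).natAbs : ℝ)

/-- The operation Θ_n on ABC-solutions, with m = n if c is even and m = 0 otherwise.
The divisions are exact integer divisions. -/
def theta (n : ℕ) (a b c : ℤ) : ℤ × ℤ × ℤ :=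
  let m : ℕ := if 2 ∣ c then n else 0
  (-((a - b) ^ n / 2 ^ m), -((c ^ n - (a - b) ^ n) / 2 ^ m), c ^ n / 2 ^ m)

section ABCAux
set_option linter.deprecated false

lemma rad_one : rad 1 = 1 := by simp [rad]

lemma rad_pos (n : ℕ) : 0 < rad n :=
  Finset.prod_pos fun p hp => (Nat.prime_of_mem_primeFactors hp).pos

lemma rad_dvd (n : ℕ) : rad n ∣ n := Nat.prod_primeFactors_dvd n

lemma rad_le {n : ℕ} (h : n ≠ 0) : rad n ≤ n := Nat.le_of_dvd (Nat.pos_of_ne_zero h) (rad_dvd n)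

lemma rad_pow (x : ℕ) {k : ℕ} (hk : k ≠ 0) : rad (x ^ k) = rad x := by
  unfold rad; rw [Nat.primeFactors_pow x hk]

lemma rad_mono {x y : ℕ} (h : x ∣ y) (hy : y ≠ 0) : rad x ∣ rad y :=
  Finset.prod_dvd_prod_of_subset _ _ _ (Nat.primeFactors_mono h hy)

lemma rad_mul_dvd (x y : ℕ) : rad (x * y) ∣ rad x * rad y := by
  rcases eq_or_ne x 0 with rfl | hx
  · simp [rad]
  rcases eq_or_ne y 0 with rfl | hy
  · simp [rad]
  unfold rad
  rw [Nat.primeFactors_mul hx hy, ← Finset.union_sdiff_self_eq_union (s := x.primeFactors),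
    Finset.prod_union Finset.disjoint_sdiff]
  exact mul_dvd_mul dvd_rfl (Finset.prod_dvd_prod_of_subset _ _ _ (Finset.sdiff_subset))

lemma rad_mul_le (x y : ℕ) : rad (x * y) ≤ rad x * rad y :=
  Nat.le_of_dvd (Nat.mul_pos (rad_pos x) (rad_pos y)) (rad_mul_dvd x y)

lemma rad_mul_coprime {x y : ℕ} (h : Nat.Coprime x y) (hx : x ≠ 0) (hy : y ≠ 0) :
    rad (x * y) = rad x * rad y := by
  unfold rad
  rw [Nat.primeFactors_mul hx hy, Finset.prod_union h.disjoint_primeFactors]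

lemma rad_two : rad 2 = 2 := by
  unfold rad
  rw [Nat.Prime.primeFactors Nat.prime_two, Finset.prod_singleton]

lemma rad_four : rad 4 = 2 := by
  have : (4 : ℕ) = 2 ^ 2 := by norm_num
  rw [this, rad_pow 2 (by norm_num), rad_two]

lemma key_dvd (N : ℕ) (hN : 0 < N) (v w : ℤ) :
    (N : ℤ) ∣ v ^ (2 * (N * N.totient)) * w ^ (2 * (N * N.totient)) *
      (w ^ (2 * (N * N.totient)) - v ^ (2 * (N * N.totient))) := by
  set n := 2 * (N * N.totient) with hn
  have hNn : N ≤ n := by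
    have h1 : 1 ≤ N.totient := Nat.totient_pos.mpr hN
    calc N = 1 * (N * 1) := by ring
    _ ≤ 2 * (N * N.totient) := by
        apply Nat.mul_le_mul (by norm_num) (Nat.mul_le_mul_left N h1)
  have heven : Even n := ⟨N * N.totient, by rw [hn]; ring⟩
  suffices H : ∀ M : ℕ, M ∣ N → (M : ℤ) ∣ v ^ n * w ^ n * (w ^ n - v ^ n) from H N dvd_rfl
  intro M
  induction M using Nat.recOnPosPrimePosCoprime with
  | prime_pow p k hp hk =>
    intro hdvd
    have hpp : p.Prime := hp
    have hkn : k ≤ n := by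
      have h1 : k < 2 ^ k := Nat.lt_two_pow_self (n := k)
      have h2 : 2 ^ k ≤ p ^ k := Nat.pow_le_pow_left hpp.two_le k
      have h3 : p ^ k ≤ N := Nat.le_of_dvd hN hdvd
      omega
    have hcast : ((p ^ k : ℕ) : ℤ) = (p : ℤ) ^ k := by push_cast; ring
    rw [hcast]
    by_cases hv : (p : ℤ) ∣ v
    · exact dvd_mul_of_dvd_left (dvd_mul_of_dvd_left
        ((pow_dvd_pow_of_dvd hv k).trans (pow_dvd_pow v hkn)) _) _
    by_cases hw : (p : ℤ) ∣ w
    · exact dvd_mul_of_dvd_left (dvd_mul_of_dvd_right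
        ((pow_dvd_pow_of_dvd hw k).trans (pow_dvd_pow w hkn)) _) _
    -- Euler case
    have key : ∀ x : ℤ, ¬ (p : ℤ) ∣ x → x ^ n ≡ 1 [ZMOD (p ^ k : ℕ)] := by
      intro x hx
      have hXp : ¬ p ∣ x.natAbs := fun h => hx (Int.natCast_dvd.mpr h)
      have hcop : Nat.Coprime x.natAbs (p ^ k) :=
        Nat.Coprime.pow_right _ (((Nat.Prime.coprime_iff_not_dvd hpp).mpr hXp)).symm
      obtain ⟨s, hs⟩ : Nat.totient (p ^ k) ∣ n := by
        refine (Nat.totient_dvd_of_dvd hdvd).trans ⟨2 * N, by rw [hn]; ring⟩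
      have heul : x.natAbs ^ n ≡ 1 [MOD p ^ k] := by
        rw [hs, pow_mul]
        calc (x.natAbs ^ (p ^ k).totient) ^ s ≡ 1 ^ s [MOD p ^ k] :=
          (Nat.ModEq.pow_totient hcop).pow s
        _ = 1 := one_pow s
      have hint : ((x.natAbs : ℤ)) ^ n ≡ 1 [ZMOD (p ^ k : ℕ)] := by
        have := Int.natCast_modEq_iff.mpr heul
        push_cast at this ⊢
        exact this
      rwa [← Int.abs_eq_natAbs, heven.pow_abs] at hint
    have hvv := key v hv
    have hww := key w hw
    have : ((p ^ k : ℕ) : ℤ) ∣ w ^ n - v ^ n := (hvv.trans (key w hw).symm).dvd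
    rw [hcast] at this
    exact dvd_mul_of_dvd_right this _
  | zero => exact fun h => absurd (Nat.eq_zero_of_zero_dvd h) hN.ne'
  | one => intro _; simp
  | coprime a b ha hb hab iha ihb =>
    intro hdvd
    have hA := iha ((Dvd.intro b rfl).trans hdvd)
    have hB := ihb ((Dvd.intro_left a rfl).trans hdvd)
    have hco : IsCoprime (a : ℤ) (b : ℤ) := Nat.Coprime.isCoprime hab
    have : ((a : ℤ) * b) ∣ _ := hco.mul_dvd hA hB
    rwa [Int.natCast_mul]

lemma exists_vw {a b c : ℤ} (h : IsABCSolution a b c) :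
    ∃ v w : ℤ, ∃ e : ℤ, (e = 1 ∨ e = 4) ∧ IsCoprime v w ∧ v ≠ 0 ∧ 0 < w ∧
      (c = w ∨ c = 2 * w) ∧ w ^ 2 - v ^ 2 = e * (a * b) := by
  obtain ⟨hsum, ha, hb, hab, hbc, hac, cab, cbc, cac⟩ := h
  obtain ⟨x, y, hxy⟩ := cab
  rcases Int.even_or_odd c with hc | hc
  · -- c even
    obtain ⟨l, hl⟩ := hc
    have hodd : ¬ (2 : ℤ) ∣ a := by
      intro h2a
      have h2c : (2 : ℤ) ∣ c := ⟨l, by linarith⟩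
      have : IsUnit (2 : ℤ) := cac.isUnit_of_dvd' h2a h2c
      rw [Int.isUnit_iff] at this; omega
    have hev : (2 : ℤ) ∣ (a - b) := by
      have : a - b = 2 * a + c := by linarith
      rcases hodd with _
      -- a - b = 2a + c, c = l + l
      exact ⟨a + l, by linarith⟩
    obtain ⟨k, hk⟩ := hev
    refine ⟨k, l, 1, Or.inl rfl, ?_, ?_, ?_, Or.inr (by linarith), by nlinarith⟩
    · -- coprime k l : l - k = -a, l + k = -b
      have h1 : l - k = -a := by linarith
      have h2 : l + k = -b := by linarith
      exact ⟨x - y, -(x + y), by linear_combination hxy - x * (by linarith : a = k - l) - y * (by linarith : b = -(l + k))⟩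
    · intro h0; apply hab; rw [h0] at hk; omega
    · -- 0 < l
      have : 0 < c := by linarith
      omega
  · -- c odd
    obtain ⟨m, hm⟩ := hc
    refine ⟨a - b, c, 4, Or.inr rfl, ?_, sub_ne_zero.mpr hab, by linarith, Or.inl rfl, by nlinarith⟩
    refine ⟨-m * (x - y), 1 - m * (-(x + y)), ?_⟩
    linear_combination (-2 * m) * hxy + m * (x + y) * hsum + hm

lemma new_solution {v w : ℤ} (hco : IsCoprime v w) (hv0 : v ≠ 0) (hw0 : 0 < w)
    (hlt : v ^ 2 < w ^ 2) {n' : ℕ} (hn' : 0 < n') :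
    IsABCSolution (-v ^ (2 * n')) (v ^ (2 * n') - w ^ (2 * n')) (w ^ (2 * n')) := by
  have hApos : 0 < v ^ (2 * n') := by
    rw [pow_mul]; exact pow_pos (by positivity) n'
  have hBlt : v ^ (2 * n') < w ^ (2 * n') := by
    rw [pow_mul, pow_mul]
    exact pow_lt_pow_left₀ hlt (sq_nonneg v) hn'.ne' |>.trans_le le_rfl
  have hCpos : 0 < w ^ (2 * n') := pow_pos hw0 _
  have hpow : IsCoprime (v ^ (2 * n')) (w ^ (2 * n')) := (hco.pow : _)
  refine ⟨by ring, by linarith, by linarith, ?_, by intro h; linarith, by intro h; linarith, ?_, ?_, ?_⟩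
  · -- A ≠ B
    intro h
    have hw2 : w ^ (2 * n') = 2 * v ^ (2 * n') := by linarith [neg_eq_iff_eq_neg.mp h]
    have hdvd : v ^ (2 * n') ∣ w ^ (2 * n') := ⟨2, by linarith⟩
    have hunit : IsUnit (v ^ (2 * n')) := hpow.isUnit_of_dvd' dvd_rfl hdvd
    rw [Int.isUnit_iff] at hunit
    have hv1 : v ^ (2 * n') = 1 := by rcases hunit with h1 | h1 <;> omega
    rw [hv1, mul_one] at hw2
    -- w ^ (2n') = 2 impossible
    rcases (by omega : w = 1 ∨ 2 ≤ w) with rfl | h2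
    · simp at hw2
    · have : (2:ℤ) ^ (2 * n') ≤ w ^ (2 * n') := pow_le_pow_left₀ (by norm_num) h2 _
      have : (4:ℤ) ≤ 2 ^ (2 * n') := by
        calc (4:ℤ) = 2 ^ 2 := by norm_num
        _ ≤ 2 ^ (2 * n') := pow_le_pow_right₀ (by norm_num) (by omega)
      omega
  · -- coprime A B
    have h1 := (hpow.neg_right.add_mul_left_right 1).neg_left
    rwa [mul_one, ← sub_eq_neg_add] at h1
  · -- coprime B C
    have h1 := (hpow.symm.add_mul_left_right (-1)).symm
    rwa [mul_neg_one, ← sub_eq_add_neg] at h1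
  · exact hpow.neg_left

lemma rad_bound {a b c v w e : ℤ} (he : e = 1 ∨ e = 4) (hw0 : 0 < w)
    (hcw : c = w ∨ c = 2 * w) (hwv : w ^ 2 - v ^ 2 = e * (a * b)) (hv0 : v ≠ 0)
    (ha0 : a ≠ 0) (hb0 : b ≠ 0) (hlt : v ^ 2 < w ^ 2)
    (hcop : Nat.Coprime (a * b).natAbs c.natAbs) {n' : ℕ} (hn' : 0 < n') :
    rad ((-v ^ (2 * n') * (v ^ (2 * n') - w ^ (2 * n')) * w ^ (2 * n')).natAbs) ≤
      2 * n' * c.natAbs ^ (2 * n' - 1) * rad ((a * b * c).natAbs) := by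
  set n := 2 * n' with hn
  set V := v.natAbs with hV
  set W := w.natAbs with hW
  set cN := c.natAbs with hcN
  set abN := (a * b).natAbs with habN
  -- the geometric sum factor
  set K : ℤ := ∑ i ∈ Finset.range n', (w ^ 2) ^ i * (v ^ 2) ^ (n' - 1 - i) with hKdef
  have hgeom : K * (w ^ 2 - v ^ 2) = w ^ n - v ^ n := by
    rw [hKdef, geom_sum₂_mul, hn, pow_mul, pow_mul]
  have hK0 : 0 ≤ K := Finset.sum_nonneg fun i _ => by positivity
  have hKle : K ≤ (n' : ℤ) * (w ^ 2) ^ (n' - 1) := by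
    calc K ≤ (Finset.range n').card • ((w ^ 2) ^ (n' - 1)) := by
          apply Finset.sum_le_card_nsmul
          intro i hi
          rw [Finset.mem_range] at hi
          calc (w ^ 2) ^ i * (v ^ 2) ^ (n' - 1 - i)
              ≤ (w ^ 2) ^ i * (w ^ 2) ^ (n' - 1 - i) := by
                apply mul_le_mul_of_nonneg_left (pow_le_pow_left₀ (sq_nonneg v) hlt.le _) (by positivity)
          _ = (w ^ 2) ^ (i + (n' - 1 - i)) := (pow_add _ _ _).symm
          _ = (w ^ 2) ^ (n' - 1) := by congr 1; omega
      _ = (n' : ℤ) * (w ^ 2) ^ (n' - 1) := by rw [Finset.card_range, nsmul_eq_mul]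
  have hwc : (W : ℤ) = w := Int.natAbs_of_nonneg hw0.le
  have hVW : V < W := by
    by_contra hcon
    push_neg at hcon
    have : (W:ℤ) ≤ (V:ℤ) := by exact_mod_cast hcon
    have hVabs : (V:ℤ) = |v| := Int.abs_eq_natAbs v ▸ rfl
    have hWabs : (W:ℤ) = |w| := Int.abs_eq_natAbs w ▸ rfl
    nlinarith [abs_nonneg v, sq_abs v, sq_abs w]
  have hWcN : W ∣ cN ∧ W ≤ cN := by
    rcases hcw with rfl | rfl
    · exact ⟨dvd_rfl, le_rfl⟩
    · constructor
      · rw [hcN, Int.natAbs_mul]; exact Dvd.intro_left _ rfl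
      · rw [hcN, Int.natAbs_mul]; simp [Int.natAbs_natCast]; omega
  have hcN0 : cN ≠ 0 := by
    intro h0
    rcases hcw with rfl | rfl <;> simp [hcN, Int.natAbs_eq_zero] at h0 <;> omega
  -- natAbs decomposition
  have hprod : (-v ^ n * (v ^ n - w ^ n) * w ^ n) = v ^ n * (K * (w ^ 2 - v ^ 2)) * w ^ n := by
    rw [hgeom]; ring
  set KN := K.natAbs with hKN
  set F := (w ^ 2 - v ^ 2).natAbs with hF
  have hPdecomp : (-v ^ n * (v ^ n - w ^ n) * w ^ n).natAbs = V ^ n * (KN * F) * W ^ n := by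
    rw [hprod, Int.natAbs_mul, Int.natAbs_mul, Int.natAbs_mul, Int.natAbs_pow, Int.natAbs_pow]
  have hFle : rad F ≤ 2 * rad abN := by
    have : F = e.natAbs * abN := by rw [hF, hwv, Int.natAbs_mul]
    rw [this]
    calc rad (e.natAbs * abN) ≤ rad e.natAbs * rad abN := rad_mul_le _ _
    _ ≤ 2 * rad abN := by
        apply Nat.mul_le_mul_right
        rcases he with rfl | rfl
        · simp [rad_one]
        · simp [rad_four]
  have hKNle : KN ≤ n' * cN ^ (2 * (n' - 1)) := by
    have h1 : (KN : ℤ) ≤ (n' : ℤ) * ((W : ℤ) ^ 2) ^ (n' - 1) := by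
      rw [hKN, Int.natAbs_of_nonneg hK0, hwc]; exact hKle
    have h2 : KN ≤ n' * W ^ (2 * (n' - 1)) := by
      have : ((n' * W ^ (2 * (n' - 1)) : ℕ) : ℤ) = (n' : ℤ) * ((W : ℤ) ^ 2) ^ (n' - 1) := by
        push_cast; rw [← pow_mul]
      omega
    calc KN ≤ n' * W ^ (2 * (n' - 1)) := h2
    _ ≤ n' * cN ^ (2 * (n' - 1)) := by
        apply Nat.mul_le_mul_left
        exact Nat.pow_le_pow_left hWcN.2 _
  have hV0 : V ≠ 0 := fun h => hv0 (Int.natAbs_eq_zero.mp h)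
  have hW0 : W ≠ 0 := fun h => by simp [hW, Int.natAbs_eq_zero] at h; omega
  have hn0 : n ≠ 0 := by omega
  -- main chain
  calc rad ((-v ^ n * (v ^ n - w ^ n) * w ^ n).natAbs)
      = rad (V ^ n * (KN * F) * W ^ n) := by rw [hPdecomp]
    _ ≤ rad (V ^ n * (KN * F)) * rad (W ^ n) := rad_mul_le _ _
    _ ≤ rad (V ^ n) * rad (KN * F) * rad (W ^ n) := by
        exact Nat.mul_le_mul_right _ (rad_mul_le _ _)
    _ ≤ rad (V ^ n) * (rad KN * rad F) * rad (W ^ n) := by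
        exact Nat.mul_le_mul_right _ (Nat.mul_le_mul_left _ (rad_mul_le _ _))
    _ = rad V * (rad KN * rad F) * rad W := by rw [rad_pow _ hn0, rad_pow _ hn0]
    _ ≤ V * (KN * (2 * rad abN)) * rad cN := by
        have hKpos : 0 < K := by
          apply Finset.sum_pos'
          · intro i _; positivity
          · refine ⟨n' - 1, Finset.mem_range.mpr (by omega), ?_⟩
            have hv2 : 0 < v ^ 2 := lt_of_le_of_ne (sq_nonneg v) (Ne.symm (pow_ne_zero 2 hv0))
            have hw2 : 0 < w ^ 2 := by positivity
            positivity
        have hKN0 : KN ≠ 0 := by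
          rw [hKN, Int.natAbs_ne_zero]; omega
        apply Nat.mul_le_mul
        apply Nat.mul_le_mul (rad_le hV0)
        exact Nat.mul_le_mul (rad_le hKN0) hFle
        exact Nat.le_of_dvd (rad_pos _) (rad_mono hWcN.1 hcN0)
    _ ≤ cN * ((n' * cN ^ (2 * (n' - 1))) * (2 * rad abN)) * rad cN := by
        apply Nat.mul_le_mul_right
        exact Nat.mul_le_mul (le_trans (Nat.le_of_lt hVW) hWcN.2) (Nat.mul_le_mul_right _ hKNle)
    _ = 2 * n' * cN ^ (2 * n' - 1) * (rad abN * rad cN) := by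
        rw [show 2 * n' - 1 = 2 * (n' - 1) + 1 from by omega, pow_succ]
        ring
    _ = 2 * n' * cN ^ (2 * n' - 1) * rad ((a * b * c).natAbs) := by
        rw [← rad_mul_coprime hcop (by simp [habN, Int.natAbs_eq_zero]; tauto) hcN0]
        congr 1
        rw [habN, hcN, ← Int.natAbs_mul]

end ABCAux

/-- the congruence ABC conjecture for any positive integer N
implies the full ABC conjecture. -/

theorem congruence_ABC_implies_ABC (N : ℕ) (hN : 0 < N)
    (hcong : ∀ ε : ℝ, 0 < ε → ∃ C : ℝ, ∀ a b c : ℤ,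
      IsABCSolution a b c → (N : ℤ) ∣ a * b * c → fABC a b c ε < C) :
    ∀ ε : ℝ, 0 < ε → ∃ C' : ℝ, ∀ a b c : ℤ,
      IsABCSolution a b c → fABC a b c ε < C' := by
  intro ε hε
  set n' : ℕ := N * N.totient with hn'def
  have hn'pos : 0 < n' := Nat.mul_pos hN (Nat.totient_pos.mpr hN)
  set nR : ℝ := ((2 * n' : ℕ) : ℝ) with hnRdef
  have hnR2 : (2 : ℝ) ≤ nR := by
    rw [hnRdef]
    have : (2 : ℕ) ≤ 2 * n' := by omega
    exact_mod_cast this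
  have h1ε : (0 : ℝ) < 1 + ε := by linarith
  have hnRpos : (0 : ℝ) < nR := by linarith
  set ε' : ℝ := ε / (nR * (1 + ε)) with hε'def
  have hε'pos : 0 < ε' := div_pos hε (by positivity)
  have hε'mul : ε' * (nR * (1 + ε)) = ε := div_mul_cancel₀ _ (by positivity)
  set δ : ℝ := 1 - ε' * (nR - 1) with hδdef
  have hδpos : 0 < δ := by nlinarith
  have hfrac : 1 + ε' ≤ (1 + ε) * δ := by nlinarith
  obtain ⟨K, hK⟩ := hcong ε' hε'pos
  refine ⟨(K + nR * Real.log 2 + (1 + ε') * Real.log nR) / δ, ?_⟩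
  intro a b c hsol
  obtain ⟨v, w, e, he, hco, hv0, hw0, hcw, hwv⟩ := exists_vw hsol
  obtain ⟨hsum, hA, hB, hab, hbc, hac, cab, cbc, cac⟩ := hsol
  have ha0 : a ≠ 0 := hA.ne
  have hb0 : b ≠ 0 := hB.ne
  have hcpos : 0 < c := by linarith
  have habpos : 0 < a * b := mul_pos_of_neg_of_neg hA hB
  have hlt : v ^ 2 < w ^ 2 := by rcases he with rfl | rfl <;> nlinarith
  have hsolN := new_solution hco hv0 hw0 hlt hn'pos
  have hdvd : (N : ℤ) ∣ -v ^ (2 * n') * (v ^ (2 * n') - w ^ (2 * n')) * w ^ (2 * n') := by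
    have h0 := key_dvd N hN v w
    have heq : -v ^ (2 * n') * (v ^ (2 * n') - w ^ (2 * n')) * w ^ (2 * n')
        = v ^ (2 * (N * N.totient)) * w ^ (2 * (N * N.totient)) *
          (w ^ (2 * (N * N.totient)) - v ^ (2 * (N * N.totient))) := by
      rw [hn'def]; ring
    rw [heq]; exact h0
  have hq := hK _ _ _ hsolN hdvd
  -- coprimality of ab and c over ℕ
  have hcopN : Nat.Coprime (a * b).natAbs c.natAbs := by
    have h1 : IsCoprime (a * b) c := IsCoprime.mul_left cac cbc
    exact Int.isCoprime_iff_gcd_eq_one.mp h1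
  have hradP := rad_bound he hw0 hcw hwv hv0 ha0 hb0 hlt hcopN hn'pos
  set P : ℕ := rad ((-v ^ (2 * n') * (v ^ (2 * n') - w ^ (2 * n')) * w ^ (2 * n')).natAbs) with hPdef
  set Rad : ℕ := rad ((a * b * c).natAbs) with hRaddef
  set Lc : ℝ := Real.log (c : ℝ) with hLcdef
  set ρ : ℝ := Real.log (Rad : ℝ) with hρdef
  have hρ0 : 0 ≤ ρ := Real.log_nonneg (by exact_mod_cast rad_pos _)
  have hcNcast : ((c.natAbs : ℕ) : ℝ) = (c : ℝ) := by
    rw [Nat.cast_natAbs, abs_of_pos (by exact_mod_cast hcpos)]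
  -- log of the new c-part
  have hwR : (0 : ℝ) < (w : ℝ) := by exact_mod_cast hw0
  have hlogC : Real.log ((w ^ (2 * n') : ℤ) : ℝ) = nR * Real.log (w : ℝ) := by
    push_cast
    rw [Real.log_pow, hnRdef]
  have hlogw : Lc ≤ Real.log 2 + Real.log (w : ℝ) := by
    have hc2w : (c : ℝ) ≤ 2 * (w : ℝ) := by
      rcases hcw with rfl | rfl <;> push_cast <;> linarith
    calc Lc ≤ Real.log (2 * (w : ℝ)) := Real.log_le_log (by exact_mod_cast hcpos) hc2w
    _ = Real.log 2 + Real.log (w : ℝ) := Real.log_mul two_ne_zero hwR.ne'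
  -- log of the radical bound
  have hlogR : Real.log (P : ℝ) ≤ Real.log nR + (nR - 1) * Lc + ρ := by
    have h1 : Real.log (P : ℝ) ≤
        Real.log (((2 * n' * c.natAbs ^ (2 * n' - 1) * Rad : ℕ) : ℝ)) := by
      apply Real.log_le_log (by exact_mod_cast (rad_pos _ : 0 < P))
      exact_mod_cast hradP
    refine h1.trans (le_of_eq ?_)
    have hcN0 : (c.natAbs : ℝ) ≠ 0 := by
      rw [hcNcast]; exact_mod_cast hcpos.ne'
    push_cast
    rw [Real.log_mul (by positivity) (by exact_mod_cast (rad_pos _).ne'),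
      Real.log_mul (by positivity) (by positivity), Real.log_pow]
    rw [hcNcast]
    have hcast1 : ((2 * n' - 1 : ℕ) : ℝ) = nR - 1 := by
      rw [hnRdef]
      have : (1 : ℕ) ≤ 2 * n' := by omega
      push_cast [Nat.cast_sub this]
      ring
    rw [hcast1, hnRdef]
    push_cast
    ring
  -- main inequality
  unfold fABC at hq
  rw [hlogC] at hq
  have hmain : δ * Lc < K + nR * Real.log 2 + (1 + ε') * Real.log nR + (1 + ε') * ρ := by
    have h2 : (1 + ε') * Real.log (P : ℝ) ≤
        (1 + ε') * (Real.log nR + (nR - 1) * Lc + ρ) :=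
      mul_le_mul_of_nonneg_left hlogR (by positivity)
    have h3 : nR * Lc - nR * Real.log 2 ≤ nR * Real.log (w : ℝ) := by
      have := mul_le_mul_of_nonneg_left hlogw hnRpos.le
      linarith [this]
    have h4 : nR * Lc - nR * Real.log 2 <
        K + (1 + ε') * (Real.log nR + (nR - 1) * Lc + ρ) := by linarith
    have h5 : δ * Lc = nR * Lc - (1 + ε') * ((nR - 1) * Lc) := by rw [hδdef]; ring
    linarith [h4, h5]
  unfold fABC
  rw [lt_div_iff₀ hδpos]
  have h6 : (1 + ε') * ρ ≤ ((1 + ε) * δ) * ρ := mul_le_mul_of_nonneg_right hfrac hρ0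
  linarith [hmain, h6]
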